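/- Let a > 0, let μ_a be the probability measure on ℕ with μ_a({n}) = (1/Z_a) · aⁿ/(n!)², Z_a = Σ_{k≥0} a^k/(k!)², and let 𝒜_a f(n) = a(f(n+1) − f(n)) + n²(f(n−1) − f(n)) for n ≥ 1, 𝒜_a f(0) = a(f(1) − f(0)). Then for every function g : ℕ → ℝ satisfying |g(m) − g(n)| ≤ |m − n| for all m, n and Σ_{n≥0} μ_a({n}) g(n) = 0, there exists a function f : ℕ → ℝ with |f(n+1) − f(n)| ≤ 9 for all n ∈ ℕ such that 𝒜_a f(n) = g(n) for all n ∈ ℕ. -/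

import Mathlib

open Filter

noncomputable def bp (a : ℝ) (k : ℕ) : ℝ := a ^ k / (k.factorial : ℝ) ^ 2

lemma bp_pos {a : ℝ} (ha : 0 < a) (k : ℕ) : 0 < bp a k := by
  unfold bp; positivity

lemma bp_succ (a : ℝ) (k : ℕ) : bp a (k+1) = bp a k * (a / ((k:ℝ)+1)^2) := by
  unfold bp
  rw [Nat.factorial_succ, pow_succ]
  push_cast
  have h1 : ((k.factorial : ℝ)) ≠ 0 := Nat.cast_ne_zero.2 k.factorial_ne_zero
  have h2 : ((k:ℝ)+1) ≠ 0 := by positivity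
  field_simp

/-- geometric decay of the bp tail -/
lemma bp_decay {a ρ : ℝ} (ha : 0 < a) {m : ℕ} (hρ0 : 0 ≤ ρ)
    (h : ∀ i : ℕ, m ≤ i → a / ((i:ℝ)+1)^2 ≤ ρ) :
    ∀ j : ℕ, bp a (j + m) ≤ bp a m * ρ ^ j := by
  intro j
  induction j with
  | zero => simp
  | succ j ih =>
    have hj : (j + m) + 1 = (j+1) + m := by omega
    have hb := bp_pos ha (j + m)
    calc bp a ((j+1) + m) = bp a ((j+m)+1) := by rw [hj]
      _ = bp a (j+m) * (a / (((j+m:ℕ):ℝ)+1)^2) := bp_succ a (j+m)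
      _ ≤ (bp a m * ρ ^ j) * ρ := by
          have hbm := bp_pos ha m
          apply mul_le_mul ih (h (j+m) (Nat.le_add_left m j)) (by positivity)
          positivity
      _ = bp a m * ρ ^ (j+1) := by ring

lemma summable_bp {a : ℝ} (ha : 0 < a) : Summable (bp a) := by
  apply summable_of_ratio_norm_eventually_le (r := 1/2) (by norm_num)
  filter_upwards [eventually_ge_atTop (⌈2*a⌉₊)] with n hn
  have hn' : 2*a ≤ (n:ℝ) := le_trans (Nat.le_ceil _) (by exact_mod_cast hn)
  rw [bp_succ]
  have hb := bp_pos ha n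
  rw [Real.norm_eq_abs, Real.norm_eq_abs, abs_of_pos (by positivity), abs_of_pos hb]
  have h1 : a / ((n:ℝ)+1)^2 ≤ 1/2 := by
    rw [div_le_div_iff₀ (by positivity) (by norm_num)]
    nlinarith [sq_nonneg ((n:ℝ))]
  calc bp a n * (a / ((n:ℝ)+1)^2) ≤ bp a n * (1/2) := mul_le_mul_of_nonneg_left h1 hb.le
    _ = 1/2 * bp a n := by ring

lemma summable_mul_bp {a : ℝ} (ha : 0 < a) : Summable (fun k : ℕ => (k:ℝ) * bp a k) := by
  apply summable_of_ratio_norm_eventually_le (r := 1/2) (by norm_num)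
  filter_upwards [eventually_ge_atTop (⌈2*a⌉₊ + 1)] with n hn
  have hn1 : (1:ℕ) ≤ n := le_trans (Nat.le_add_left 1 _) hn
  have hn' : 2*a ≤ (n:ℝ) := by
    have h2 : (⌈2*a⌉₊ : ℝ) ≤ n := by exact_mod_cast le_trans (Nat.le_add_right _ 1) hn
    exact le_trans (Nat.le_ceil _) h2
  have hb := bp_pos ha n
  rw [bp_succ]
  have hn1' : (1:ℝ) ≤ n := by exact_mod_cast hn1
  rw [Real.norm_eq_abs, Real.norm_eq_abs, abs_of_pos (by positivity), abs_of_pos (by positivity)]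
  have key : ((n:ℝ)+1) * (bp a n * (a/((n:ℝ)+1)^2)) = bp a n * (a/((n:ℝ)+1)) := by
    field_simp
  push_cast
  rw [key]
  have h1 : a / ((n:ℝ)+1) ≤ n/2 := by
    rw [div_le_div_iff₀ (by positivity) (by norm_num)]
    nlinarith
  calc bp a n * (a/((n:ℝ)+1)) ≤ bp a n * (n/2) := mul_le_mul_of_nonneg_left h1 hb.le
    _ = 1/2 * ((n:ℝ) * bp a n) := by ring

lemma summable_bg {a : ℝ} (ha : 0 < a) {g : ℕ → ℝ}
    (hLip : ∀ m n : ℕ, |g m - g n| ≤ |(m : ℝ) - (n : ℝ)|) :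
    Summable (fun k : ℕ => bp a k * g k) := by
  apply Summable.of_abs
  have hbig : Summable (fun k : ℕ => bp a k * |g 0| + (k:ℝ) * bp a k) :=
    ((summable_bp ha).mul_right _).add (summable_mul_bp ha)
  refine Summable.of_nonneg_of_le (fun k => abs_nonneg _) (fun k => ?_) hbig
  have hb := bp_pos ha k
  have h1 : |g k| ≤ |g 0| + (k:ℝ) := by
    have := hLip k 0
    simp only [Nat.cast_zero, sub_zero] at this
    have h2 : |(k:ℝ)| = (k:ℝ) := abs_of_nonneg (Nat.cast_nonneg k)
    calc |g k| = |g k - g 0 + g 0| := by ring_nf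
      _ ≤ |g k - g 0| + |g 0| := abs_add_le _ _
      _ ≤ (k:ℝ) + |g 0| := by rw [h2] at this; linarith
      _ = |g 0| + (k:ℝ) := by ring
  calc |bp a k * g k| = bp a k * |g k| := by rw [abs_mul, abs_of_pos hb]
    _ ≤ bp a k * (|g 0| + (k:ℝ)) := mul_le_mul_of_nonneg_left h1 hb.le
    _ = bp a k * |g 0| + (k:ℝ) * bp a k := by ring

noncomputable def Abp (a : ℝ) (n : ℕ) : ℝ := ∑ k ∈ Finset.range (n+1), bp a k
noncomputable def Bbp (a : ℝ) (n : ℕ) : ℝ := ∑' j : ℕ, bp a (j+(n+1))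
noncomputable def Ubp (a : ℝ) (n : ℕ) : ℝ := ∑ k ∈ Finset.range (n+1), ((n:ℝ)-(k:ℝ)) * bp a k
noncomputable def Tbp (a : ℝ) (n : ℕ) : ℝ := ∑' j : ℕ, ((j:ℝ)+1) * bp a (j+(n+1))
noncomputable def Sbp (a : ℝ) : ℝ := ∑' k : ℕ, bp a k

lemma summable_shift {a : ℝ} (ha : 0 < a) (m : ℕ) : Summable (fun j : ℕ => bp a (j+m)) :=
  (summable_nat_add_iff m).2 (summable_bp ha)

lemma summable_T {a : ℝ} (ha : 0 < a) (n : ℕ) :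
    Summable (fun j : ℕ => ((j:ℝ)+1) * bp a (j+(n+1))) := by
  have h1 : Summable (fun j : ℕ => ((j+(n+1):ℕ):ℝ) * bp a (j+(n+1))) :=
    (summable_nat_add_iff (f := fun k : ℕ => (k:ℝ) * bp a k) (n+1)).2 (summable_mul_bp ha)
  refine Summable.of_nonneg_of_le (fun j => mul_nonneg (by positivity) (bp_pos ha _).le)
    (fun j => ?_) h1
  have hb := (bp_pos ha (j+(n+1))).le
  apply mul_le_mul_of_nonneg_right _ hb
  push_cast; linarith [Nat.cast_nonneg (α := ℝ) n]

lemma S_split {a : ℝ} (ha : 0 < a) (n : ℕ) : Sbp a = Abp a n + Bbp a n := by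
  rw [Sbp, Abp, Bbp, ← Summable.sum_add_tsum_nat_add (n+1) (summable_bp ha)]

lemma A_pos {a : ℝ} (ha : 0 < a) (n : ℕ) : 0 < Abp a n :=
  Finset.sum_pos (fun k _ => bp_pos ha k) (by simp)

lemma B_nonneg {a : ℝ} (ha : 0 < a) (n : ℕ) : 0 ≤ Bbp a n :=
  tsum_nonneg (fun j => (bp_pos ha _).le)

lemma S_pos {a : ℝ} (ha : 0 < a) : 0 < Sbp a := by
  rw [S_split ha 0]; have := A_pos ha 0; have := B_nonneg ha 0; linarith

lemma A_le_S {a : ℝ} (ha : 0 < a) (n : ℕ) : Abp a n ≤ Sbp a := by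
  rw [S_split ha n]; linarith [B_nonneg ha n]

lemma B_le_S {a : ℝ} (ha : 0 < a) (n : ℕ) : Bbp a n ≤ Sbp a := by
  rw [S_split ha n]; linarith [A_pos ha n]

lemma U_nonneg {a : ℝ} (ha : 0 < a) (n : ℕ) : 0 ≤ Ubp a n := by
  apply Finset.sum_nonneg
  intro k hk
  have hk' : k ≤ n := Nat.lt_succ_iff.1 (Finset.mem_range.1 hk)
  have h1 : (k:ℝ) ≤ n := Nat.cast_le.2 hk'
  exact mul_nonneg (by linarith) (bp_pos ha k).le

lemma T_nonneg {a : ℝ} (ha : 0 < a) (n : ℕ) : 0 ≤ Tbp a n :=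
  tsum_nonneg (fun j => mul_nonneg (by positivity) (bp_pos ha _).le)

lemma U_le {a : ℝ} (ha : 0 < a) (n : ℕ) : Ubp a n ≤ (n:ℝ) * Abp a n := by
  rw [Ubp, Abp, Finset.mul_sum]
  apply Finset.sum_le_sum
  intro k hk
  have hb := (bp_pos ha k).le
  have : (0:ℝ) ≤ (k:ℝ) := Nat.cast_nonneg k
  nlinarith

lemma T_le {a : ℝ} (ha : 0 < a) (n : ℕ) :
    Tbp a n ≤ a/((n:ℝ)+1) * (bp a n + Bbp a n) := by
  have hsum : ∑' j : ℕ, bp a (j+n) = bp a n + Bbp a n := by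
    rw [Summable.tsum_eq_zero_add (summable_shift ha n)]
    simp only [Nat.zero_add, Bbp]
    congr 1
    apply tsum_congr
    intro j
    congr 1
    omega
  have hstep : ∀ j : ℕ, ((j:ℝ)+1) * bp a (j+(n+1)) ≤ (a/((n:ℝ)+1)) * bp a (j+n) := by
    intro j
    have heq : bp a (j+(n+1)) = bp a (j+n) * (a / (((j+n:ℕ):ℝ)+1)^2) := by
      rw [show j+(n+1) = (j+n)+1 by omega, bp_succ]
    rw [heq]
    have hb := (bp_pos ha (j+n)).le
    have hfrac : ((j:ℝ)+1) * (a / (((j+n:ℕ):ℝ)+1)^2) ≤ a/((n:ℝ)+1) := by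
      push_cast
      rw [mul_div_assoc', div_le_div_iff₀ (by positivity) (by positivity)]
      have h0 : (0:ℝ) ≤ (j:ℝ) := Nat.cast_nonneg j
      have h1 : (0:ℝ) ≤ (n:ℝ) := Nat.cast_nonneg n
      nlinarith [sq_nonneg ((j:ℝ)-(n:ℝ)), mul_nonneg h0 h1, sq_nonneg ((j:ℝ)+(n:ℝ))]
    calc ((j:ℝ)+1) * (bp a (j+n) * (a / (((j+n:ℕ):ℝ)+1)^2))
        = (((j:ℝ)+1) * (a / (((j+n:ℕ):ℝ)+1)^2)) * bp a (j+n) := by ring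
      _ ≤ (a/((n:ℝ)+1)) * bp a (j+n) := mul_le_mul_of_nonneg_right hfrac hb
  calc Tbp a n ≤ ∑' j : ℕ, (a/((n:ℝ)+1)) * bp a (j+n) := by
        exact Summable.tsum_le_tsum hstep (summable_T ha n) ((summable_shift ha n).mul_left _)
    _ = (a/((n:ℝ)+1)) * ∑' j : ℕ, bp a (j+n) := tsum_mul_left
    _ = a/((n:ℝ)+1) * (bp a n + Bbp a n) := by rw [hsum]

lemma AB_le {a : ℝ} (ha : 0 < a) (n : ℕ) :
    Abp a n * Bbp a n ≤ ((n:ℝ)+1) * bp a n * Sbp a := by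
  have hp := bp_pos ha n
  rcases le_or_gt ((n:ℝ)^2) a with hcase | hcase
  · -- a ≥ n² : partial sums bounded by (n+1) bp n
    have step : ∀ k, k + 1 ≤ n → bp a k ≤ bp a (k+1) := by
      intro k hk
      have hk' : ((k:ℝ)+1) ≤ (n:ℝ) := by exact_mod_cast hk
      have hb := bp_pos ha k
      have h1 : (1:ℝ) ≤ a/((k:ℝ)+1)^2 := by
        rw [le_div_iff₀ (by positivity)]
        have hnn : (0:ℝ) ≤ (n:ℝ) := Nat.cast_nonneg n
        nlinarith
      calc bp a k = bp a k * 1 := by ring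
        _ ≤ bp a k * (a/((k:ℝ)+1)^2) := mul_le_mul_of_nonneg_left h1 hb.le
        _ = bp a (k+1) := (bp_succ a k).symm
    have hmono : ∀ k, k ≤ n → bp a k ≤ bp a n := by
      have key : ∀ d k, k + d = n → bp a k ≤ bp a n := by
        intro d
        induction d with
        | zero => intro k h; rw [show k = n by omega]
        | succ d ih =>
          intro k h
          exact le_trans (step k (by omega)) (ih (k+1) (by omega))
      intro k hk
      exact key (n-k) k (by omega)
    have hA : Abp a n ≤ ((n:ℝ)+1) * bp a n := by
      calc Abp a n ≤ ∑ k ∈ Finset.range (n+1), bp a n :=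
            Finset.sum_le_sum (fun k hk => hmono k (Nat.lt_succ_iff.1 (Finset.mem_range.1 hk)))
        _ = ((n:ℝ)+1) * bp a n := by
            rw [Finset.sum_const, Finset.card_range]; push_cast; ring
    calc Abp a n * Bbp a n ≤ (((n:ℝ)+1) * bp a n) * Sbp a := by
          apply mul_le_mul hA (B_le_S ha n) (B_nonneg ha n) (by positivity)
      _ = ((n:ℝ)+1) * bp a n * Sbp a := by ring
  · -- a < n² : tail bounded by (n+1) bp n
    have hn1 : 1 ≤ n := by
      by_contra h
      have : n = 0 := by omega
      rw [this] at hcase; norm_num at hcase; linarith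
    have hn1' : (1:ℝ) ≤ (n:ℝ) := by exact_mod_cast hn1
    set r : ℝ := (n:ℝ)^2/((n:ℝ)+1)^2 with hr_def
    have hr0 : 0 ≤ r := by positivity
    have hr_eq : r * ((n:ℝ)+1)^2 = (n:ℝ)^2 := by
      rw [hr_def, div_mul_cancel₀ _ (by positivity)]
    have hr1 : r < 1 := by
      rw [hr_def, div_lt_one (by positivity)]; nlinarith
    have hcond : ∀ i : ℕ, n ≤ i → a / ((i:ℝ)+1)^2 ≤ r := by
      intro i hi
      have hi' : (n:ℝ) ≤ (i:ℝ) := Nat.cast_le.2 hi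
      rw [hr_def]
      apply div_le_div₀ (by positivity) hcase.le (by positivity)
      nlinarith
    have hdec := bp_decay ha hr0 hcond
    have hBle : Bbp a n ≤ bp a n * r * (1-r)⁻¹ := by
      have h1 : ∀ j : ℕ, bp a (j+(n+1)) ≤ (bp a n * r) * r^j := by
        intro j
        calc bp a (j+(n+1)) = bp a ((j+1)+n) := by rw [show j+(n+1) = (j+1)+n by omega]
          _ ≤ bp a n * r^(j+1) := hdec (j+1)
          _ = (bp a n * r) * r^j := by ring
      calc Bbp a n ≤ ∑' j : ℕ, (bp a n * r) * r^j :=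
            Summable.tsum_le_tsum h1 (summable_shift ha (n+1))
              ((summable_geometric_of_lt_one hr0 hr1).mul_left _)
        _ = (bp a n * r) * ∑' j : ℕ, r^j := tsum_mul_left
        _ = bp a n * r * (1-r)⁻¹ := by rw [tsum_geometric_of_lt_one hr0 hr1]
    have h1r : 0 < 1 - r := by linarith
    have hB : Bbp a n ≤ ((n:ℝ)+1) * bp a n := by
      have h2 : r * (1-r)⁻¹ ≤ (n:ℝ)+1 := by
        rw [← div_eq_mul_inv, div_le_iff₀ h1r]
        nlinarith [hr_eq]
      calc Bbp a n ≤ bp a n * r * (1-r)⁻¹ := hBle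
        _ = bp a n * (r * (1-r)⁻¹) := by ring
        _ ≤ bp a n * ((n:ℝ)+1) := mul_le_mul_of_nonneg_left h2 hp.le
        _ = ((n:ℝ)+1) * bp a n := by ring
    calc Abp a n * Bbp a n ≤ Sbp a * (((n:ℝ)+1) * bp a n) := by
          apply mul_le_mul (A_le_S ha n) hB (B_nonneg ha n) (S_pos ha).le
      _ = ((n:ℝ)+1) * bp a n * Sbp a := by ring

lemma B_le_geom {a : ℝ} (ha : 0 < a) (n : ℕ) (h4 : 4*a < ((n:ℝ)+1)^2) :
    Bbp a n ≤ 4/3 * (a/((n:ℝ)+1)^2) * bp a n := by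
  have hp := bp_pos ha n
  set ρ : ℝ := a/((n:ℝ)+1)^2 with hρ_def
  have hρ0 : 0 ≤ ρ := by positivity
  have hρ4 : ρ < 1/4 := by
    rw [hρ_def, div_lt_iff₀ (by positivity)]; nlinarith
  have hρ1 : ρ < 1 := by linarith
  have hcond : ∀ i : ℕ, n+1 ≤ i → a / ((i:ℝ)+1)^2 ≤ ρ := by
    intro i hi
    have hi' : ((n:ℝ)+1) ≤ (i:ℝ) := by exact_mod_cast hi
    rw [hρ_def]
    apply div_le_div₀ (by positivity) le_rfl (by positivity)
    nlinarith
  have hdec := bp_decay ha hρ0 hcond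
  have hBle : Bbp a n ≤ bp a (n+1) * (1-ρ)⁻¹ := by
    calc Bbp a n ≤ ∑' j : ℕ, bp a (n+1) * ρ^j :=
          Summable.tsum_le_tsum (fun j => hdec j) (summable_shift ha (n+1))
            ((summable_geometric_of_lt_one hρ0 hρ1).mul_left _)
      _ = bp a (n+1) * ∑' j : ℕ, ρ^j := tsum_mul_left
      _ = bp a (n+1) * (1-ρ)⁻¹ := by rw [tsum_geometric_of_lt_one hρ0 hρ1]
  have h1 : (1-ρ)⁻¹ ≤ 4/3 := by
    rw [inv_le_comm₀ (by linarith) (by norm_num)]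
    linarith
  have hsucc : bp a (n+1) = bp a n * ρ := by rw [bp_succ, hρ_def]
  calc Bbp a n ≤ bp a (n+1) * (1-ρ)⁻¹ := hBle
    _ = bp a n * ρ * (1-ρ)⁻¹ := by rw [hsucc]
    _ ≤ bp a n * ρ * (4/3) := by
        apply mul_le_mul_of_nonneg_left h1 (by positivity)
    _ = 4/3 * ρ * bp a n := by ring

lemma main_est {a : ℝ} (ha : 0 < a) (n : ℕ) :
    Bbp a n * Ubp a n + Abp a n * Tbp a n ≤ 6 * a * bp a n * Sbp a := by
  have hp := bp_pos ha n
  have hA := A_pos ha n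
  have hB := B_nonneg ha n
  have hS := S_pos ha
  have hU := U_nonneg ha n
  have hT := T_nonneg ha n
  have hUle := U_le ha n
  have hTle := T_le ha n
  have hAS := A_le_S ha n
  have hBS := B_le_S ha n
  have hnn : (0:ℝ) ≤ (n:ℝ) := Nat.cast_nonneg n
  have hn1 : (0:ℝ) < (n:ℝ)+1 := by linarith
  rcases le_or_gt (((n:ℝ)+1)^2) (4*a) with hcase | hcase
  · -- central regime
    have hAB := AB_le ha n
    have hBU : Bbp a n * Ubp a n ≤ 4 * a * bp a n * Sbp a := by
      calc Bbp a n * Ubp a n ≤ Bbp a n * ((n:ℝ) * Abp a n) :=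
            mul_le_mul_of_nonneg_left hUle hB
        _ = (n:ℝ) * (Abp a n * Bbp a n) := by ring
        _ ≤ (n:ℝ) * (((n:ℝ)+1) * bp a n * Sbp a) :=
            mul_le_mul_of_nonneg_left hAB hnn
        _ ≤ 4 * a * bp a n * Sbp a := by nlinarith [mul_pos hp hS]
    have hAT : Abp a n * Tbp a n ≤ 2 * a * bp a n * Sbp a := by
      have h1 : Abp a n * Tbp a n ≤ Abp a n * (a/((n:ℝ)+1) * (bp a n + Bbp a n)) :=
        mul_le_mul_of_nonneg_left hTle hA.le
      have h2 : Abp a n * (a/((n:ℝ)+1) * (bp a n + Bbp a n))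
          = a/((n:ℝ)+1) * (Abp a n * bp a n) + a/((n:ℝ)+1) * (Abp a n * Bbp a n) := by ring
      have hd : a/((n:ℝ)+1) ≤ a := div_le_self ha.le (by linarith)
      have hd0 : 0 ≤ a/((n:ℝ)+1) := by positivity
      have h3 : a/((n:ℝ)+1) * (Abp a n * bp a n) ≤ a * (Sbp a * bp a n) := by
        apply mul_le_mul hd (mul_le_mul_of_nonneg_right hAS hp.le)
          (by positivity) ha.le
      have h4 : a/((n:ℝ)+1) * (Abp a n * Bbp a n) ≤ a/((n:ℝ)+1) * (((n:ℝ)+1) * bp a n * Sbp a) :=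
        mul_le_mul_of_nonneg_left (AB_le ha n) hd0
      have h5 : a/((n:ℝ)+1) * (((n:ℝ)+1) * bp a n * Sbp a) = a * bp a n * Sbp a := by
        field_simp
      nlinarith
    linarith
  · -- tail regime
    have hBg := B_le_geom ha n hcase
    have hρ4 : a/((n:ℝ)+1)^2 < 1/4 := by
      rw [div_lt_iff₀ (by positivity)]; nlinarith
    have hB3 : Bbp a n ≤ 1/3 * bp a n := by
      calc Bbp a n ≤ 4/3 * (a/((n:ℝ)+1)^2) * bp a n := hBg
        _ ≤ 4/3 * (1/4) * bp a n := by nlinarith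
        _ = 1/3 * bp a n := by ring
    have hBU : Bbp a n * Ubp a n ≤ 4/3 * a * bp a n * Sbp a := by
      have h1 : Ubp a n ≤ (n:ℝ) * Sbp a :=
        le_trans hUle (mul_le_mul_of_nonneg_left hAS hnn)
      calc Bbp a n * Ubp a n ≤ (4/3 * (a/((n:ℝ)+1)^2) * bp a n) * ((n:ℝ) * Sbp a) := by
            apply mul_le_mul hBg h1 hU (by positivity)
        _ = 4/3 * a * bp a n * Sbp a * ((n:ℝ)/((n:ℝ)+1)^2) := by ring
        _ ≤ 4/3 * a * bp a n * Sbp a * 1 := by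
            apply mul_le_mul_of_nonneg_left _ (by positivity)
            rw [div_le_one (by positivity)]; nlinarith
        _ = 4/3 * a * bp a n * Sbp a := by ring
    have hAT : Abp a n * Tbp a n ≤ 4/3 * a * bp a n * Sbp a := by
      have h2 : Tbp a n ≤ a/((n:ℝ)+1) * (4/3 * bp a n) := by
        calc Tbp a n ≤ a/((n:ℝ)+1) * (bp a n + Bbp a n) := hTle
          _ ≤ a/((n:ℝ)+1) * (4/3 * bp a n) := by
              apply mul_le_mul_of_nonneg_left _ (by positivity)
              linarith
      calc Abp a n * Tbp a n ≤ Sbp a * (a/((n:ℝ)+1) * (4/3 * bp a n)) := by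
            apply mul_le_mul hAS h2 hT hS.le
        _ = 4/3 * a * bp a n * Sbp a * (1/((n:ℝ)+1)) := by ring
        _ ≤ 4/3 * a * bp a n * Sbp a * 1 := by
            apply mul_le_mul_of_nonneg_left _ (by positivity)
            rw [div_le_one (by positivity)]; linarith
        _ = 4/3 * a * bp a n * Sbp a := by ring
    nlinarith [mul_pos (mul_pos (mul_pos (by norm_num : (0:ℝ) < 6) ha) hp) hS]



/-- The weight `μ_a({n}) = (aⁿ/(n!)²) / Z_a` with `Z_a = ∑_{k≥0} a^k/(k!)²`. -/
noncomputable def besselWeight (a : ℝ) (n : ℕ) : ℝ :=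
  (a ^ n / (n.factorial : ℝ) ^ 2) / ∑' k : ℕ, a ^ k / (k.factorial : ℝ) ^ 2

/-- The Stein (birth–death) operator `𝒜_a f(n) = a(f(n+1) − f(n)) + n²(f(n−1) − f(n))`
(for `n = 0` the death term vanishes since its coefficient `n² = 0`). -/
noncomputable def steinOp (a : ℝ) (f : ℕ → ℝ) (n : ℕ) : ℝ :=
  a * (f (n + 1) - f n) + (n : ℝ) ^ 2 * (f (n - 1) - f n)

/-- **Solution of the Stein equation with gradient bound `9`.**
For every `1`-Lipschitz `g : ℕ → ℝ` with `∑_n μ_a({n}) g(n) = 0` there is an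
`f : ℕ → ℝ` with `|f(n+1) − f(n)| ≤ 9` for all `n` solving `𝒜_a f = g`. -/
theorem steinOp_solution_gradient_bound (a : ℝ) (ha : 0 < a)
    (g : ℕ → ℝ) (hLip : ∀ m n : ℕ, |g m - g n| ≤ |(m : ℝ) - (n : ℝ)|)
    (hmean : ∑' n : ℕ, besselWeight a n * g n = 0) :
    ∃ f : ℕ → ℝ, (∀ n : ℕ, |f (n + 1) - f n| ≤ 9) ∧ ∀ n : ℕ, steinOp a f n = g n := by
  have hS := S_pos ha
  have hbg := summable_bg ha hLip
  set H : ℕ → ℝ := fun n => ∑ k ∈ Finset.range (n+1), bp a k * g k with hH_def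
  set Δ : ℕ → ℝ := fun n => H n / (a * bp a n) with hΔ_def
  -- mean zero in unnormalized form
  have hG : ∑' k : ℕ, bp a k * g k = 0 := by
    have hw : ∀ k : ℕ, besselWeight a k * g k = (bp a k * g k) / Sbp a := by
      intro k
      show (bp a k / Sbp a) * g k = (bp a k * g k) / Sbp a
      ring
    have h2 : ∑' k : ℕ, besselWeight a k * g k = (∑' k : ℕ, bp a k * g k) / Sbp a := by
      simp only [hw]
      exact tsum_div_const
    rw [h2] at hmean
    have := hS.ne'
    field_simp at hmean
    simpa using hmean
  refine ⟨fun n => ∑ k ∈ Finset.range n, Δ k, ?_, ?_⟩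
  · -- gradient bound
    intro n
    have hfd : (∑ k ∈ Finset.range (n+1), Δ k) - (∑ k ∈ Finset.range n, Δ k) = Δ n := by
      rw [Finset.sum_range_succ]; ring
    rw [hfd]
    have hp := bp_pos ha n
    have hA := A_pos ha n
    have hB := B_nonneg ha n
    -- tail sums
    have hR'sum : Summable (fun j : ℕ => bp a (j+(n+1)) * (g (j+(n+1)) - g n)) := by
      apply Summable.of_abs
      refine Summable.of_nonneg_of_le (fun j => abs_nonneg _) (fun j => ?_) (summable_T ha n)
      have hb := bp_pos ha (j+(n+1))
      have hl := hLip (j+(n+1)) n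
      have hcast : |((j+(n+1):ℕ):ℝ) - (n:ℝ)| = (j:ℝ)+1 := by
        push_cast
        rw [abs_of_nonneg (by linarith [Nat.cast_nonneg (α := ℝ) j])]
        ring
      rw [hcast] at hl
      calc |bp a (j+(n+1)) * (g (j+(n+1)) - g n)|
          = bp a (j+(n+1)) * |g (j+(n+1)) - g n| := by rw [abs_mul, abs_of_pos hb]
        _ ≤ bp a (j+(n+1)) * ((j:ℝ)+1) := mul_le_mul_of_nonneg_left hl hb.le
        _ = ((j:ℝ)+1) * bp a (j+(n+1)) := by ring
    set L' : ℝ := ∑ k ∈ Finset.range (n+1), bp a k * (g k - g n) with hL'_def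
    set R' : ℝ := ∑' j : ℕ, bp a (j+(n+1)) * (g (j+(n+1)) - g n) with hR'_def
    have hHsplit : H n = L' + g n * Abp a n := by
      rw [hL'_def, hH_def, Abp, Finset.mul_sum, ← Finset.sum_add_distrib]
      exact Finset.sum_congr rfl (fun k _ => by ring)
    have hRsplit : H n + (R' + g n * Bbp a n) = 0 := by
      have h1 : (∑' j : ℕ, bp a (j+(n+1)) * g (j+(n+1))) = R' + g n * Bbp a n := by
        have h2 : (fun j : ℕ => bp a (j+(n+1)) * g (j+(n+1)))
            = fun j : ℕ => bp a (j+(n+1)) * (g (j+(n+1)) - g n) + g n * bp a (j+(n+1)) :=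
          funext (fun j => by ring)
        rw [h2, Summable.tsum_add hR'sum (Summable.mul_left _ (summable_shift ha (n+1))),
          tsum_mul_left, hR'_def, Bbp]
      rw [← h1, hH_def]
      rw [Summable.sum_add_tsum_nat_add (f := fun k => bp a k * g k) (n+1) hbg]
      exact hG
    have hkey : Sbp a * H n = Bbp a n * L' - Abp a n * R' := by
      have hSsp := S_split ha n
      linear_combination H n * hSsp + Bbp a n * hHsplit + Abp a n * hRsplit
    have hLU : |L'| ≤ Ubp a n := by
      calc |L'| ≤ ∑ k ∈ Finset.range (n+1), |bp a k * (g k - g n)| :=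
            Finset.abs_sum_le_sum_abs _ _
        _ ≤ Ubp a n := by
            rw [Ubp]
            apply Finset.sum_le_sum
            intro k hk
            have hk' : k ≤ n := Nat.lt_succ_iff.1 (Finset.mem_range.1 hk)
            have hkn : (k:ℝ) ≤ (n:ℝ) := Nat.cast_le.2 hk'
            have hb := bp_pos ha k
            have hl := hLip k n
            have hcast : |(k:ℝ) - (n:ℝ)| = (n:ℝ) - (k:ℝ) := by
              rw [abs_sub_comm, abs_of_nonneg (by linarith)]
            rw [hcast] at hl
            calc |bp a k * (g k - g n)| = bp a k * |g k - g n| := by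
                  rw [abs_mul, abs_of_pos hb]
              _ ≤ bp a k * ((n:ℝ) - (k:ℝ)) := mul_le_mul_of_nonneg_left hl hb.le
              _ = ((n:ℝ) - (k:ℝ)) * bp a k := by ring
    have hRT : |R'| ≤ Tbp a n := by
      have h1 : |R'| ≤ ∑' j : ℕ, |bp a (j+(n+1)) * (g (j+(n+1)) - g n)| := by
        rw [hR'_def]
        simpa only [Real.norm_eq_abs] using norm_tsum_le_tsum_norm (f := fun j : ℕ =>
          bp a (j+(n+1)) * (g (j+(n+1)) - g n)) (by simpa only [Real.norm_eq_abs] using hR'sum.abs)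
      refine le_trans h1 (Summable.tsum_le_tsum (fun j => ?_) hR'sum.abs (summable_T ha n))
      have hb := bp_pos ha (j+(n+1))
      have hl := hLip (j+(n+1)) n
      have hcast : |((j+(n+1):ℕ):ℝ) - (n:ℝ)| = (j:ℝ)+1 := by
        push_cast
        rw [abs_of_nonneg (by linarith [Nat.cast_nonneg (α := ℝ) j])]
        ring
      rw [hcast] at hl
      calc |bp a (j+(n+1)) * (g (j+(n+1)) - g n)|
          = bp a (j+(n+1)) * |g (j+(n+1)) - g n| := by rw [abs_mul, abs_of_pos hb]
        _ ≤ bp a (j+(n+1)) * ((j:ℝ)+1) := mul_le_mul_of_nonneg_left hl hb.le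
        _ = ((j:ℝ)+1) * bp a (j+(n+1)) := by ring
    have hSH : Sbp a * |H n| ≤ 6 * a * bp a n * Sbp a := by
      calc Sbp a * |H n| = |Sbp a * H n| := by
            rw [abs_mul, abs_of_pos hS]
        _ = |Bbp a n * L' - Abp a n * R'| := by rw [hkey]
        _ ≤ |Bbp a n * L'| + |Abp a n * R'| := abs_sub _ _
        _ = Bbp a n * |L'| + Abp a n * |R'| := by
            rw [abs_mul, abs_mul, abs_of_nonneg hB, abs_of_pos hA]
        _ ≤ Bbp a n * Ubp a n + Abp a n * Tbp a n := by
            have := mul_le_mul_of_nonneg_left hLU hB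
            have := mul_le_mul_of_nonneg_left hRT hA.le
            linarith
        _ ≤ 6 * a * bp a n * Sbp a := main_est ha n
    have hHb : |H n| ≤ 6 * (a * bp a n) := by
      have h2 : Sbp a * |H n| ≤ Sbp a * (6 * (a * bp a n)) := by
        calc Sbp a * |H n| ≤ 6 * a * bp a n * Sbp a := hSH
          _ = Sbp a * (6 * (a * bp a n)) := by ring
      exact le_of_mul_le_mul_left h2 hS
    have hab : 0 < a * bp a n := mul_pos ha hp
    rw [hΔ_def]
    simp only []
    rw [abs_div, abs_of_pos hab, div_le_iff₀ hab]
    nlinarith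
  · -- Stein equation
    intro n
    have hfd : ∀ m : ℕ, (∑ k ∈ Finset.range (m+1), Δ k) - (∑ k ∈ Finset.range m, Δ k) = Δ m := by
      intro m; rw [Finset.sum_range_succ]; ring
    cases n with
    | zero =>
      have hb0 := bp_pos ha 0
      show a * ((∑ k ∈ Finset.range (0+1), Δ k) - ∑ k ∈ Finset.range 0, Δ k)
          + ((0:ℕ):ℝ)^2 * (_ - _) = g 0
      rw [hfd 0]
      have hΔ0 : Δ 0 = g 0 / a := by
        rw [hΔ_def]
        simp only []
        rw [hH_def]
        simp only []
        rw [Finset.sum_range_one]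
        rw [eq_div_iff ha.ne']
        field_simp
      rw [hΔ0]
      push_cast
      field_simp
      simp
    | succ m =>
      have hbm := bp_pos ha m
      have hbm1 := bp_pos ha (m+1)
      have key : ((m:ℝ)+1)^2 * bp a (m+1) = a * bp a m := by
        rw [bp_succ]
        field_simp
      simp only [steinOp]
      rw [show m+1-1 = m from rfl, hfd (m+1)]
      have h4 : (∑ k ∈ Finset.range m, Δ k) - (∑ k ∈ Finset.range (m+1), Δ k) = -Δ m := by
        rw [Finset.sum_range_succ]; ring
      rw [h4]
      have hH1 : H (m+1) = H m + bp a (m+1) * g (m+1) := by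
        rw [hH_def]
        exact Finset.sum_range_succ _ _
      have e1 : a * Δ (m+1) = H m / bp a (m+1) + g (m+1) := by
        rw [hΔ_def]
        simp only []
        rw [hH1]
        field_simp
      have e2 : ((m:ℝ)+1)^2 * Δ m = H m / bp a (m+1) := by
        rw [hΔ_def]
        simp only []
        rw [eq_div_iff hbm1.ne']
        field_simp
        linear_combination (H m) * key
      push_cast
      calc a * Δ (m+1) + ((m:ℝ)+1)^2 * (-Δ m)
          = (a * Δ (m+1)) - (((m:ℝ)+1)^2 * Δ m) := by ring
        _ = (H m / bp a (m+1) + g (m+1)) - H m / bp a (m+1) := by rw [e1, e2]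
        _ = g (m+1) := by ring
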